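/- Let p be a prime, q = p^e a power of p, N ≥ 1 an integer, and let k be an algebraic closure of 𝔽_p. Let L be a free ℤ-module of finite rank, let φ : L → L be a ℤ-module automorphism with φ^N = id, and let Q ⊆ L be a ℤ-submodule such that the quotient L/Q is finite of cardinality not divisible by p. Set V = L ⊗_ℤ k and let F : V → V be the unique additive map satisfying F(λ ⊗ x) = φ(λ) ⊗ x^q for all λ ∈ L, x ∈ k. Define Nm_N : V → V by Nm_N(v) = v + F(v) + ⋯ + F^{N−1}(v). Then {v ∈ V : F(v) = v} = Nm_N(W), where W is the additive subgroup of V generated by all elements μ ⊗ x with μ ∈ Q and x ∈ k satisfying x^{q^N} = x. -/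

import Mathlib

open TensorProduct

theorem stmt_1 (p e q N : ℕ) (hp : p.Prime) (he : 1 ≤ e) (hq : q = p ^ e) (hN : 1 ≤ N)
    (k : Type*) [Field k] [IsAlgClosed k] [CharP k p]
    (L : Type*) [AddCommGroup L] [Module ℤ L] [Module.Free ℤ L] [Module.Finite ℤ L]
    (φ : L ≃ₗ[ℤ] L) (hφ : φ ^ N = 1)
    (Q : Submodule ℤ L) [Fintype (L ⧸ Q)] (hcard : ¬ p ∣ Fintype.card (L ⧸ Q))
    (F : TensorProduct ℤ L k →+ TensorProduct ℤ L k)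
    (hF : ∀ (l : L) (x : k), F (l ⊗ₜ[ℤ] x) = (φ l) ⊗ₜ[ℤ] (x ^ q)) :
    {v : TensorProduct ℤ L k | F v = v} =
      (fun v => ∑ i ∈ Finset.range N, (⇑F)^[i] v) ''
        ((AddSubgroup.closure
          {v : TensorProduct ℤ L k | ∃ μ ∈ Q, ∃ x : k, x ^ (q ^ N) = x ∧ v = μ ⊗ₜ[ℤ] x} :
            AddSubgroup (TensorProduct ℤ L k)) : Set (TensorProduct ℤ L k)) := by
  classical
  haveI : ExpChar k p := ExpChar.prime hp
  set S : Set (TensorProduct ℤ L k) :=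
    {v : TensorProduct ℤ L k | ∃ μ ∈ Q, ∃ x : k, x ^ (q ^ N) = x ∧ v = μ ⊗ₜ[ℤ] x} with hS
  set W : AddSubgroup (TensorProduct ℤ L k) := AddSubgroup.closure S with hWdef
  -- basic numerics
  have hq1 : 1 < q := by
    rw [hq]; exact Nat.one_lt_pow (by omega) hp.one_lt
  have hqN1 : 1 < q ^ N := Nat.one_lt_pow (by omega) hq1
  -- natural number casts are fixed by q^N power
  have hfrob : ∀ (r : ℕ) (m : ℕ), ((m : k)) ^ (p ^ r) = (m : k) := by
    intro r m
    induction r with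
    | zero => simp
    | succ r ih =>
      rw [pow_succ, pow_mul, ih]
      exact map_natCast (frobenius k p) m
  have hnatfix : ∀ m : ℕ, ((m : k)) ^ (q ^ N) = (m : k) := by
    intro m
    have hqN_as_p : q ^ N = p ^ (e * N) := by rw [hq, ← pow_mul]
    rw [hqN_as_p]; exact hfrob (e * N) m
  -- iterates of F on pure tensors
  have hiter : ∀ (j : ℕ) (l : L) (x : k), (⇑F)^[j] (l ⊗ₜ[ℤ] x) = ((φ ^ j) l) ⊗ₜ[ℤ] (x ^ q ^ j) := by
    intro j
    induction j with
    | zero => intro l x; simp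
    | succ j ih =>
      intro l x
      rw [Function.iterate_succ_apply, hF, ih, ← pow_mul, ← pow_succ']
      have hφ2 : (φ ^ (j + 1)) l = (φ ^ j) (φ l) := by rw [pow_succ]; rfl
      rw [hφ2]
  have hiterN : ∀ (l : L) (x : k), (⇑F)^[N] (l ⊗ₜ[ℤ] x) = l ⊗ₜ[ℤ] (x ^ q ^ N) := by
    intro l x
    rw [hiter N l x, hφ]
    rfl
  -- bundle F^[N] as an additive hom
  set FN : TensorProduct ℤ L k →+ TensorProduct ℤ L k :=
    { toFun := (⇑F)^[N]
      map_zero' := iterate_map_zero F N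
      map_add' := fun a b => iterate_map_add F N a b } with hFN
  have hFNapp : ∀ v, FN v = (⇑F)^[N] v := fun v => rfl
  -- W is contained in the F^[N]-fixed points
  have hWT : ∀ w ∈ W, (⇑F)^[N] w = w := by
    have hle : W ≤ (FN - AddMonoidHom.id _).ker := by
      rw [hWdef]
      refine AddSubgroup.closure_le _ |>.mpr ?_
      rintro v ⟨μ, hμ, x, hx, rfl⟩
      show _ ∈ (FN - AddMonoidHom.id _).ker
      rw [AddMonoidHom.mem_ker, AddMonoidHom.sub_apply, AddMonoidHom.id_apply, hFNapp,
        hiterN, hx, sub_self]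
    intro w hw
    have h := hle hw
    rw [AddMonoidHom.mem_ker, AddMonoidHom.sub_apply, AddMonoidHom.id_apply, hFNapp,
      sub_eq_zero] at h
    exact h
  -- pure tensors with q^N-fixed coefficient lie in W
  have hml : ∀ (l : L) (x : k), x ^ (q ^ N) = x → l ⊗ₜ[ℤ] x ∈ W := by
    intro l x hx
    set m : ℕ := Fintype.card (L ⧸ Q) with hm
    have hmQ : (m : ℤ) • l ∈ Q := by
      have h0 : (m : ℤ) • (Submodule.Quotient.mk l : L ⧸ Q) = 0 := by
        rw [natCast_zsmul]
        exact card_nsmul_eq_zero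
      rw [← Submodule.Quotient.mk_smul] at h0
      exact (Submodule.Quotient.mk_eq_zero Q).mp h0
    have hmne : (m : k) ≠ 0 := fun h => hcard ((CharP.cast_eq_zero_iff k p m).mp h)
    have hyfix : ((m : k)⁻¹ * x) ^ (q ^ N) = (m : k)⁻¹ * x := by
      rw [mul_pow, inv_pow, hnatfix m, hx]
    have key : ((m : ℤ) • l) ⊗ₜ[ℤ] ((m : k)⁻¹ * x) = l ⊗ₜ[ℤ] x := by
      have h8 := AddMonoidHom.map_zsmul
        ({ toFun := fun a : L => a ⊗ₜ[ℤ] ((m : k)⁻¹ * x)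
           map_zero' := TensorProduct.zero_tmul L _
           map_add' := fun a b => TensorProduct.add_tmul a b _ } : L →+ TensorProduct ℤ L k)
        ((m : ℤ)) l
      have h9 := AddMonoidHom.map_zsmul
        ({ toFun := fun y : k => l ⊗ₜ[ℤ] y
           map_zero' := TensorProduct.tmul_zero k l
           map_add' := fun a b => TensorProduct.tmul_add l a b } : k →+ TensorProduct ℤ L k)
        ((m : ℤ)) ((m : k)⁻¹ * x)
      simp only [AddMonoidHom.coe_mk, ZeroHom.coe_mk] at h8 h9
      rw [h8, ← h9]
      congr 1
      rw [zsmul_eq_mul, Int.cast_natCast, ← mul_assoc, mul_inv_cancel₀ hmne, one_mul]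
    rw [← key]
    exact AddSubgroup.subset_closure ⟨(m : ℤ) • l, hmQ, _, hyfix, rfl⟩
  -- F^[N]-fixed points lie in W (coordinate argument)
  have hTW : ∀ v : TensorProduct ℤ L k, (⇑F)^[N] v = v → v ∈ W := by
    intro v hv
    set ι := Module.Free.ChooseBasisIndex ℤ L with hι
    set b : Module.Basis ι ℤ L := Module.Free.chooseBasis ℤ L with hb
    set bV : Module.Basis ι k (k ⊗[ℤ] L) := Algebra.TensorProduct.basis k b with hbV
    set κ := TensorProduct.comm ℤ L k with hκ
    have h2 : ∀ (i : ι) (y : k), κ ((b i) ⊗ₜ[ℤ] y) = y • bV i := by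
      intro i y
      rw [hκ, hbV, Algebra.TensorProduct.basis_apply, TensorProduct.comm_tmul,
        TensorProduct.smul_tmul', smul_eq_mul, mul_one]
    set c : ι → k := fun i => bV.repr (κ v) i with hc
    have hrepr : v = ∑ i, (b i) ⊗ₜ[ℤ] (c i) := by
      apply κ.injective
      rw [map_sum, Finset.sum_congr rfl (fun i _ => h2 i (c i))]
      exact (bV.sum_repr (κ v)).symm
    have h3 : ∑ i, (b i) ⊗ₜ[ℤ] ((c i) ^ (q ^ N)) = ∑ i, (b i) ⊗ₜ[ℤ] (c i) := by
      calc ∑ i, (b i) ⊗ₜ[ℤ] ((c i) ^ (q ^ N))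
          = (⇑F)^[N] (∑ i, (b i) ⊗ₜ[ℤ] (c i)) := by
            rw [← hFNapp, map_sum]
            refine Finset.sum_congr rfl fun i _ => ?_
            rw [hFNapp, hiterN]
        _ = (⇑F)^[N] v := by rw [← hrepr]
        _ = v := hv
        _ = ∑ i, (b i) ⊗ₜ[ℤ] (c i) := hrepr
    have h4 : ∀ i, (c i) ^ (q ^ N) = c i := by
      have h5 : ∑ i, (((c i) ^ (q ^ N)) - c i) • bV i = 0 := by
        have h6 := congrArg κ h3
        rw [map_sum, map_sum] at h6
        simp only [h2] at h6
        calc ∑ i, (((c i) ^ (q ^ N)) - c i) • bV i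
            = ∑ i, (((c i) ^ (q ^ N)) • bV i - (c i) • bV i) := by
              exact Finset.sum_congr rfl fun i _ => sub_smul _ _ _
          _ = (∑ i, ((c i) ^ (q ^ N)) • bV i) - ∑ i, (c i) • bV i := Finset.sum_sub_distrib _ _
          _ = 0 := by rw [h6, sub_self]
      intro i
      have h7 := Fintype.linearIndependent_iff.mp bV.linearIndependent _ h5 i
      exact sub_eq_zero.mp h7
    rw [hrepr]
    exact AddSubgroup.sum_mem W fun i _ => hml (b i) (c i) (h4 i)
  -- surjectivity of F^[N] - id
  have hsurj : ∀ u : TensorProduct ℤ L k, ∃ z, (⇑F)^[N] z - z = u := by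
    intro u
    induction u using TensorProduct.induction_on with
    | zero => exact ⟨0, by simp⟩
    | tmul l x =>
      obtain ⟨y, hy⟩ : ∃ y : k, y ^ (q ^ N) - y = x := by
        have hdeg : ((Polynomial.X : Polynomial k) ^ (q ^ N)
            - (Polynomial.X + Polynomial.C x)).degree ≠ 0 := by
          rw [Polynomial.degree_sub_eq_left_of_degree_lt, Polynomial.degree_X_pow]
          · exact_mod_cast (by omega : ¬ (q ^ N = 0))
          · rw [Polynomial.degree_X_pow, Polynomial.degree_X_add_C]
            exact_mod_cast hqN1
        obtain ⟨y, hy⟩ := IsAlgClosed.exists_root _ hdeg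
        refine ⟨y, ?_⟩
        simp only [Polynomial.IsRoot, Polynomial.eval_sub, Polynomial.eval_add,
          Polynomial.eval_pow, Polynomial.eval_X, Polynomial.eval_C] at hy
        linear_combination hy
      exact ⟨l ⊗ₜ[ℤ] y, by rw [hiterN, ← TensorProduct.tmul_sub, hy]⟩
    | add a b ha hb =>
      obtain ⟨za, hza⟩ := ha
      obtain ⟨zb, hzb⟩ := hb
      refine ⟨za + zb, ?_⟩
      rw [iterate_map_add, ← hza, ← hzb]
      abel
  -- now the main equality
  ext v
  constructor
  · -- fixed point → in image
    intro hv
    simp only [Set.mem_setOf_eq] at hv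
    obtain ⟨z, hz⟩ := hsurj v
    have hFNz : (⇑F)^[N] z = z + v := by rw [← hz]; abel
    have hFNw : (⇑F)^[N] (F z - z) = F z - z := by
      have h1 : (⇑F)^[N] (F z) = F ((⇑F)^[N] z) := by
        rw [← Function.iterate_succ_apply, Function.iterate_succ_apply']
      rw [iterate_map_sub, h1, hFNz, map_add, hv]
      abel
    refine ⟨F z - z, hTW _ hFNw, ?_⟩
    show ∑ i ∈ Finset.range N, (⇑F)^[i] (F z - z) = v
    calc ∑ i ∈ Finset.range N, (⇑F)^[i] (F z - z)
        = ∑ i ∈ Finset.range N, ((⇑F)^[i + 1] z - (⇑F)^[i] z) := by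
          refine Finset.sum_congr rfl fun i _ => ?_
          rw [iterate_map_sub, Function.iterate_succ_apply]
      _ = (⇑F)^[N] z - (⇑F)^[0] z := Finset.sum_range_sub (fun i => (⇑F)^[i] z) N
      _ = v := by rw [hFNz, Function.iterate_zero_apply]; abel
  · -- image → fixed point
    rintro ⟨w, hwW, rfl⟩
    simp only [Set.mem_setOf_eq]
    have hFNw : (⇑F)^[N] w = w := hWT w hwW
    rw [map_sum]
    rw [Finset.sum_congr rfl (fun i (_ : i ∈ Finset.range N) =>
      (Function.iterate_succ_apply' (⇑F) i w).symm)]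
    obtain ⟨M, rfl⟩ : ∃ M, N = M + 1 := ⟨N - 1, by omega⟩
    rw [Finset.sum_range_succ (fun i => (⇑F)^[i + 1] w) M,
      Finset.sum_range_succ' (fun i => (⇑F)^[i] w) M]
    rw [Function.iterate_zero_apply, hFNw]
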